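/- (Common transversals of three pairwise skew lines.) Let K be a division ring and let a, b, c be pairwise skew lines of ℙ³(K). Then: (i) any two distinct common transversals of a, b, c are skew to each other; (ii) if K is infinite, then the set of common transversals of a, b, c is infinite. -/

import Mathlib

/-- A line `t` of `ℙ³(K)` is a common transversal of the lines `a`, `b`, `c` if it meets each
of them in a nonzero subspace. -/
def IsCommonTransversal {K : Type*} [DivisionRing K]
    (t a b c : Submodule K (Fin 4 → K)) : Prop :=
  t ⊓ a ≠ ⊥ ∧ t ⊓ b ≠ ⊥ ∧ t ⊓ c ≠ ⊥

section Aux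

variable {K : Type*} [DivisionRing K]

local notation "V" => (Fin 4 → K)

private lemma rank4 : Module.finrank K (Fin 4 → K) = 4 := Module.finrank_fin_fun K

private lemma sup_eq_top {x y : Submodule K V} (hx : Module.finrank K x = 2)
    (hy : Module.finrank K y = 2) (hxy : x ⊓ y = ⊥) : x ⊔ y = ⊤ := by
  apply Submodule.eq_top_of_finrank_eq
  have h := Submodule.finrank_sup_add_finrank_inf_eq x y
  rw [hxy, hx, hy, finrank_bot] at h
  rw [rank4]; omega

/-- A transversal of two skew lines meets each of them in dimension exactly 1. -/
private lemma inf_finrank_one {t x y : Submodule K V} (ht : Module.finrank K t = 2)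
    (hx : Module.finrank K x = 2) (hxy : x ⊓ y = ⊥)
    (htx : t ⊓ x ≠ ⊥) (hty : t ⊓ y ≠ ⊥) : Module.finrank K ↥(t ⊓ x) = 1 := by
  have h1 : 0 < Module.finrank K ↥(t ⊓ x) := by
    rcases Nat.eq_zero_or_pos (Module.finrank K ↥(t ⊓ x)) with h | h
    · exact absurd (Submodule.finrank_eq_zero.mp h) htx
    · exact h
  have h2 : Module.finrank K ↥(t ⊓ x) ≤ 2 := ht ▸ Submodule.finrank_mono inf_le_left
  rcases lt_or_eq_of_le h2 with h | h
  · omega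
  · exfalso
    have e1 : t ⊓ x = t := Submodule.eq_of_le_of_finrank_le inf_le_left (by omega)
    have e2 : t ⊓ x = x := Submodule.eq_of_le_of_finrank_le inf_le_right (by omega)
    have hle : t ≤ x := by rw [← e1]; exact inf_le_right
    apply hty
    rw [← le_bot_iff, ← hxy]
    exact le_inf (inf_le_left.trans hle) inf_le_right

private lemma eq_of_two_points {t t' x y : Submodule K V}
    (ht : Module.finrank K t = 2) (ht' : Module.finrank K t' = 2)
    (hxy : x ⊓ y = ⊥)
    (hPx : Module.finrank K ↥(t ⊓ x) = 1)
    (hPy : Module.finrank K ↥(t ⊓ y) = 1)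
    (hex : t ⊓ x = t' ⊓ x) (hey : t ⊓ y = t' ⊓ y) : t = t' := by
  set P := t ⊓ x
  set Q := t ⊓ y
  have hPQbot : P ⊓ Q = ⊥ := by
    rw [← le_bot_iff, ← hxy]
    exact le_inf (inf_le_left.trans inf_le_right) (inf_le_right.trans inf_le_right)
  have hsum : Module.finrank K ↥(P ⊔ Q) = 2 := by
    have h := Submodule.finrank_sup_add_finrank_inf_eq P Q
    rw [hPQbot, hPx, hPy, finrank_bot] at h
    omega
  have e1 : P ⊔ Q = t :=
    Submodule.eq_of_le_of_finrank_le (sup_le inf_le_left inf_le_left) (by omega)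
  have e2 : P ⊔ Q = t' := by
    refine Submodule.eq_of_le_of_finrank_le ?_ (by omega)
    rw [hex, hey] at *
    exact sup_le inf_le_left inf_le_left
  rw [← e1, e2]

/-- If `x` is not contained in the plane `π`, then any two transversals inside `π` meet `x`
in the same point. -/
private lemma inf_eq_of_not_le {π t t' x : Submodule K V}
    (hx : Module.finrank K x = 2) (hxπ : ¬ x ≤ π)
    (htπ : t ≤ π) (ht'π : t' ≤ π)
    (htx : Module.finrank K ↥(t ⊓ x) = 1) (ht'x : Module.finrank K ↥(t' ⊓ x) = 1) :
    t ⊓ x = t' ⊓ x := by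
  have hπx : Module.finrank K ↥(π ⊓ x) ≤ 1 := by
    by_contra h
    push_neg at h
    have h2 : Module.finrank K ↥(π ⊓ x) ≤ 2 := hx ▸ Submodule.finrank_mono inf_le_right
    have : π ⊓ x = x := Submodule.eq_of_le_of_finrank_le inf_le_right (by omega)
    exact hxπ (this ▸ inf_le_left)
  have e1 : t ⊓ x = π ⊓ x :=
    Submodule.eq_of_le_of_finrank_le (inf_le_inf_right x htπ) (by omega)
  have e2 : t' ⊓ x = π ⊓ x :=
    Submodule.eq_of_le_of_finrank_le (inf_le_inf_right x ht'π) (by omega)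
  rw [e1, e2]

end Aux

/-- Common transversals of three pairwise skew lines of `ℙ³(K)`: (i) any two distinct common
transversals are skew; (ii) if `K` is infinite, there are infinitely many common
transversals. -/
theorem common_transversals_of_skew_lines {K : Type*} [DivisionRing K]
    (a b c : Submodule K (Fin 4 → K))
    (ha : Module.finrank K a = 2) (hb : Module.finrank K b = 2)
    (hc : Module.finrank K c = 2)
    (hab : a ⊓ b = ⊥) (hac : a ⊓ c = ⊥) (hbc : b ⊓ c = ⊥) :
    (∀ t t' : Submodule K (Fin 4 → K),
        Module.finrank K t = 2 → Module.finrank K t' = 2 →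
        IsCommonTransversal t a b c → IsCommonTransversal t' a b c →
        t ≠ t' → t ⊓ t' = ⊥) ∧
    (Infinite K →
      {t : Submodule K (Fin 4 → K) |
        Module.finrank K t = 2 ∧ IsCommonTransversal t a b c}.Infinite) := by
  have hba : b ⊓ a = ⊥ := by rw [inf_comm]; exact hab
  have hca : c ⊓ a = ⊥ := by rw [inf_comm]; exact hac
  have hcb : c ⊓ b = ⊥ := by rw [inf_comm]; exact hbc
  constructor
  · -- Part (i)
    intro t t' ht ht' ⟨hta, htb, htc⟩ ⟨ht'a, ht'b, ht'c⟩ hne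
    by_contra hmeet
    -- the plane π containing both transversals
    set π := t ⊔ t' with hπ
    have htπ : t ≤ π := le_sup_left
    have ht'π : t' ≤ π := le_sup_right
    have hπ3 : Module.finrank K π ≤ 3 := by
      have h := Submodule.finrank_sup_add_finrank_inf_eq t t'
      rw [ht, ht', ← hπ] at h
      have h1 : 0 < Module.finrank K ↥(t ⊓ t') := by
        rcases Nat.eq_zero_or_pos (Module.finrank K ↥(t ⊓ t')) with h0 | h0
        · exact absurd (Submodule.finrank_eq_zero.mp h0) hmeet
        · exact h0
      omega
    -- at most one of a, b, c lies inside π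
    have key : ∀ x y : Submodule K (Fin 4 → K), Module.finrank K x = 2 →
        Module.finrank K y = 2 → x ⊓ y = ⊥ → ¬ (x ≤ π ∧ y ≤ π) := by
      rintro x y hx hy hxy ⟨hxl, hyl⟩
      have : (⊤ : Submodule K (Fin 4 → K)) ≤ π := (sup_eq_top hx hy hxy) ▸ sup_le hxl hyl
      have := Submodule.finrank_mono (M := Fin 4 → K) (R := K) this
      rw [finrank_top, rank4] at this
      omega
    -- the two lines we use
    have main : ∀ x y : Submodule K (Fin 4 → K), Module.finrank K x = 2 →
        Module.finrank K y = 2 → x ⊓ y = ⊥ → ¬ x ≤ π → ¬ y ≤ π →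
        t ⊓ x ≠ ⊥ → t ⊓ y ≠ ⊥ → t' ⊓ x ≠ ⊥ → t' ⊓ y ≠ ⊥ → False := by
      intro x y hx hy hxy hxπ hyπ h1 h2 h3 h4
      have hyx : y ⊓ x = ⊥ := by rw [inf_comm]; exact hxy
      have ftx := inf_finrank_one ht hx hxy h1 h2
      have fty := inf_finrank_one ht hy hyx h2 h1
      have ft'x := inf_finrank_one ht' hx hxy h3 h4
      have ft'y := inf_finrank_one ht' hy hyx h4 h3
      exact hne (eq_of_two_points ht ht' hxy ftx fty
        (inf_eq_of_not_le hx hxπ htπ ht'π ftx ft'x)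
        (inf_eq_of_not_le hy hyπ htπ ht'π fty ft'y))
    by_cases haπ : a ≤ π
    · have hbπ : ¬ b ≤ π := fun h => key a b ha hb hab ⟨haπ, h⟩
      have hcπ : ¬ c ≤ π := fun h => key a c ha hc hac ⟨haπ, h⟩
      exact main b c hb hc hbc hbπ hcπ htb htc ht'b ht'c
    · by_cases hbπ : b ≤ π
      · have hcπ : ¬ c ≤ π := fun h => key b c hb hc hbc ⟨hbπ, h⟩
        exact main a c ha hc hac haπ hcπ hta htc ht'a ht'c
      · exact main a b ha hb hab haπ hbπ hta htb ht'a ht'b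
  · -- Part (ii)
    intro hK
    have habtop : a ⊔ b = ⊤ := sup_eq_top ha hb hab
    -- a basis of c
    obtain ⟨B⟩ : Nonempty (Module.Basis (Fin 2) K c) :=
      ⟨Module.finBasisOfFinrankEq K c hc⟩
    set v : Fin 4 → K := (B 0 : Fin 4 → K) with hv
    set w : Fin 4 → K := (B 1 : Fin 4 → K) with hw
    have hvc : v ∈ c := (B 0).2
    have hwc : w ∈ c := (B 1).2
    have hli : LinearIndependent K ![v, w] := by
      have h := B.linearIndependent
      have h2 := h.map' c.subtype (Submodule.ker_subtype c)
      have : (c.subtype ∘ B) = ![v, w] := by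
        funext i
        fin_cases i <;> rfl
      rwa [this] at h2
    have hwne : w ≠ 0 := by
      intro h
      exact hli.ne_zero 1 (by simpa using h)
    -- for each k, the point v + k • w of c and its decomposition in a ⊕ b
    have hdecomp : ∀ k : K, ∃ p q : Fin 4 → K, p ∈ a ∧ q ∈ b ∧ v + k • w = p + q := by
      intro k
      have : v + k • w ∈ a ⊔ b := habtop ▸ Submodule.mem_top
      obtain ⟨p, hp, q, hq, hpq⟩ := Submodule.mem_sup.mp this
      exact ⟨p, q, hp, hq, hpq.symm⟩
    choose p q hp hq hpq using hdecomp
    have huc : ∀ k : K, v + k • w ∈ c := fun k => c.add_mem hvc (c.smul_mem k hwc)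
    have hune : ∀ k : K, v + k • w ≠ 0 := by
      intro k h
      have := LinearIndependent.pair_iff.mp hli 1 k (by simpa using h)
      simpa using this.1
    have hpne : ∀ k : K, p k ≠ 0 := by
      intro k h
      apply hune k
      have : v + k • w ∈ b := by rw [hpq k, h, zero_add]; exact hq k
      have hm : v + k • w ∈ b ⊓ c := ⟨this, huc k⟩
      rw [hbc] at hm
      simpa using hm
    have hqne : ∀ k : K, q k ≠ 0 := by
      intro k h
      apply hune k
      have : v + k • w ∈ a := by rw [hpq k, h, add_zero]; exact hp k
      have hm : v + k • w ∈ a ⊓ c := ⟨this, huc k⟩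
      rw [hac] at hm
      simpa using hm
    -- the transversal through the point v + k • w
    set T : K → Submodule K (Fin 4 → K) := fun k => Submodule.span K {p k, q k} with hT
    have hliT : ∀ k : K, LinearIndependent K ![p k, q k] := by
      intro k
      rw [LinearIndependent.pair_iff]
      intro s r hsr
      have h1 : s • p k = -(r • q k) := by
        rw [eq_neg_iff_add_eq_zero]; exact hsr
      have hmem : s • p k ∈ a ⊓ b := by
        constructor
        · exact a.smul_mem s (hp k)
        · rw [h1]; exact b.neg_mem (b.smul_mem r (hq k))
      rw [hab] at hmem
      have hs : s • p k = 0 := by simpa using hmem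
      have hs0 : s = 0 := by
        rcases smul_eq_zero.mp hs with h | h
        · exact h
        · exact absurd h (hpne k)
      refine ⟨hs0, ?_⟩
      rw [hs0, zero_smul, zero_add] at hsr
      rcases smul_eq_zero.mp hsr with h | h
      · exact h
      · exact absurd h (hqne k)
    have hrank : ∀ k : K, Module.finrank K (T k) = 2 := by
      intro k
      have h := finrank_span_eq_card (hliT k)
      have hr : Set.range ![p k, q k] = {p k, q k} := by
        ext x
        simp only [Set.mem_range, Fin.exists_fin_two, Matrix.cons_val_zero,
          Matrix.cons_val_one, Matrix.head_cons, Set.mem_insert_iff, Set.mem_singleton_iff]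
        tauto
      rw [hr] at h
      simpa using h
    have hpT : ∀ k : K, p k ∈ T k := fun k =>
      Submodule.subset_span (Set.mem_insert _ _)
    have hqT : ∀ k : K, q k ∈ T k := fun k =>
      Submodule.subset_span (Set.mem_insert_of_mem _ rfl)
    have huT : ∀ k : K, v + k • w ∈ T k := fun k =>
      (hpq k) ▸ (T k).add_mem (hpT k) (hqT k)
    have htrans : ∀ k : K, IsCommonTransversal (T k) a b c := by
      intro k
      refine ⟨?_, ?_, ?_⟩
      · exact fun h => hpne k (by
          have : p k ∈ T k ⊓ a := ⟨hpT k, hp k⟩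
          rw [h] at this; simpa using this)
      · exact fun h => hqne k (by
          have : q k ∈ T k ⊓ b := ⟨hqT k, hq k⟩
          rw [h] at this; simpa using this)
      · exact fun h => hune k (by
          have : v + k • w ∈ T k ⊓ c := ⟨huT k, huc k⟩
          rw [h] at this; simpa using this)
    -- injectivity of T
    have hinj : Function.Injective T := by
      intro k k' hkk'
      by_contra hne
      -- both points lie in T k, so c ≤ T k
      have h1 : v + k • w ∈ T k := huT k
      have h2 : v + k' • w ∈ T k := hkk' ▸ huT k'
      have hwT : w ∈ T k := by
        have hsub : (k' - k) • w ∈ T k := by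
          have : (v + k' • w) - (v + k • w) = (k' - k) • w := by
            rw [sub_smul]; abel
          rw [← this]
          exact (T k).sub_mem h2 h1
        have hk0 : k' - k ≠ 0 := sub_ne_zero.mpr (Ne.symm hne)
        have := (T k).smul_mem (k' - k)⁻¹ hsub
        rwa [smul_smul, inv_mul_cancel₀ hk0, one_smul] at this
      have hvT : v ∈ T k := by
        have := (T k).sub_mem h1 ((T k).smul_mem k hwT)
        simpa using this
      have hcT : c ≤ T k := by
        intro x hx
        have hxr := B.repr ⟨x, hx⟩
        have hsum := B.sum_repr ⟨x, hx⟩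
        have hxeq : x = (B.repr ⟨x, hx⟩ 0) • v + (B.repr ⟨x, hx⟩ 1) • w := by
          have := congrArg (Submodule.subtype c) hsum
          simp only [map_sum, map_smul, Fin.sum_univ_two] at this
          exact this.symm
        rw [hxeq]
        exact (T k).add_mem ((T k).smul_mem _ hvT) ((T k).smul_mem _ hwT)
      have hceq : c = T k := Submodule.eq_of_le_of_finrank_le hcT (by rw [hrank k, hc])
      have := (htrans k).1
      rw [← hceq, hca] at this
      exact this rfl
    haveI := hK
    exact Set.infinite_of_injective_forall_mem hinj (fun k => ⟨hrank k, htrans k⟩)
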